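/- For dim V = N ≥ 2, the spectrum of 𝒜_{2,1} = τ_{11'} + τ_{21'} acting on V ⊗ V ⊗ V* is {0, N−1, N+1}, and consequently 𝒫_{2,1} = (1 − 𝒜_{2,1}/(N−1))(1 − 𝒜_{2,1}/(N+1)) is the projector onto the subspace of tensors T with both partial traces tr_{11'}(T) = 0 and tr_{21'}(T) = 0. -/

import Mathlib

open scoped BigOperators

noncomputable section

/-- Mixed tensors of valence (m,n) on an N-dimensional space, given by components. -/
abbrev Tens (N m n : ℕ) := (Fin m → Fin N) → (Fin n → Fin N) → ℂ

namespace Mixed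

variable (N : ℕ)

/-- The contraction (trace) map `tr_{ab'}` contracting the a-th contravariant slot
with the b-th covariant slot. -/
def trMap (m n : ℕ) (a : Fin (m+1)) (b : Fin (n+1)) :
    Tens N (m+1) (n+1) →ₗ[ℂ] Tens N m n where
  toFun t := fun i j => ∑ k : Fin N, t (a.insertNth k i) (b.insertNth k j)
  map_add' t s := by funext i j; simp [Finset.sum_add_distrib]
  map_smul' c t := by funext i j; simp [Finset.mul_sum]

/-- The insertion map `tr⁺_{ab'}` inserting the canonical invariant `∑ᵢ eᵢ ⊗ eⁱ`
at positions a and b. -/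
def insMap (m n : ℕ) (a : Fin (m+1)) (b : Fin (n+1)) :
    Tens N m n →ₗ[ℂ] Tens N (m+1) (n+1) where
  toFun t := fun i j =>
    if i a = j b then t (fun x => i (a.succAbove x)) (fun y => j (b.succAbove y)) else 0
  map_add' t s := by funext i j; by_cases h : i a = j b <;> simp [h]
  map_smul' c t := by funext i j; by_cases h : i a = j b <;> simp [h]

/-- `τ_{ab'} = tr⁺_{ab'} ∘ tr_{ab'}`. -/
def tau (m n : ℕ) (a : Fin (m+1)) (b : Fin (n+1)) :
    Module.End ℂ (Tens N (m+1) (n+1)) :=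
  (insMap N m n a b).comp (trMap N m n a b)

/-- `𝒜_{m,n} = ∑_{a,b'} τ_{ab'}`. -/
def AOp (m n : ℕ) : Module.End ℂ (Tens N (m+1) (n+1)) :=
  ∑ a : Fin (m+1), ∑ b : Fin (n+1), tau N m n a b

/-- The traceless subspace: common kernel of all contractions. -/
def traceless (m n : ℕ) : Submodule ℂ (Tens N (m+1) (n+1)) :=
  ⨅ a : Fin (m+1), ⨅ b : Fin (n+1), LinearMap.ker (trMap N m n a b)

/-- The span of the images of all insertion maps. -/
def traceSpan (m n : ℕ) : Submodule ℂ (Tens N (m+1) (n+1)) :=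
  ⨆ a : Fin (m+1), ⨆ b : Fin (n+1), LinearMap.range (insMap N m n a b)

end Mixed

section Aux

lemma tau1_apply (N : ℕ) (t : Tens N 2 1) (i : Fin 2 → Fin N) (j : Fin 1 → Fin N) :
    Mixed.tau N 1 0 0 0 t i j = if i 0 = j 0 then ∑ k : Fin N, t ![k, i 1] ![k] else 0 := by
  simp only [Mixed.tau, Mixed.insMap, Mixed.trMap, LinearMap.comp_apply, LinearMap.coe_mk,
    AddHom.coe_mk]
  congr 1
  apply Finset.sum_congr rfl
  intro k _
  congr 1
  · funext x; fin_cases x <;> simp [Fin.insertNth_apply_below, Fin.insertNth_apply_above, Fin.insertNth, Fin.succAbove, Fin.succAboveCases, Fin.lt_def]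
  · funext y; fin_cases y <;> simp [Fin.insertNth]

lemma tau2_apply (N : ℕ) (t : Tens N 2 1) (i : Fin 2 → Fin N) (j : Fin 1 → Fin N) :
    Mixed.tau N 1 0 1 0 t i j = if i 1 = j 0 then ∑ k : Fin N, t ![i 0, k] ![k] else 0 := by
  simp only [Mixed.tau, Mixed.insMap, Mixed.trMap, LinearMap.comp_apply, LinearMap.coe_mk,
    AddHom.coe_mk]
  congr 1
  apply Finset.sum_congr rfl
  intro k _
  congr 1
  · funext x; fin_cases x <;> simp [Fin.insertNth_apply_below, Fin.insertNth_apply_above, Fin.insertNth, Fin.succAbove, Fin.succAboveCases, Fin.lt_def]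
  · funext y; fin_cases y <;> simp [Fin.insertNth]

variable (N : ℕ)
local notation "t1" => Mixed.tau N 1 0 0 0
local notation "t2" => Mixed.tau N 1 0 1 0

lemma h11 : t1 * t1 = (N:ℂ) • t1 := by
  refine LinearMap.ext fun t => funext fun i => funext fun j => ?_
  simp only [Module.End.mul_apply, LinearMap.smul_apply, Pi.smul_apply, tau1_apply, smul_eq_mul]
  by_cases h : i 0 = j 0 <;>
    simp [h, Finset.sum_const, Finset.mul_sum]

lemma h22 : t2 * t2 = (N:ℂ) • t2 := by
  refine LinearMap.ext fun t => funext fun i => funext fun j => ?_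
  simp only [Module.End.mul_apply, LinearMap.smul_apply, Pi.smul_apply, tau2_apply, smul_eq_mul]
  by_cases h : i 1 = j 0 <;>
    simp [h, Finset.sum_const, Finset.mul_sum]

lemma h121 : t1 * (t2 * t1) = t1 := by
  refine LinearMap.ext fun t => funext fun i => funext fun j => ?_
  simp only [Module.End.mul_apply]
  rw [tau1_apply, tau1_apply]
  by_cases h : i 0 = j 0 <;>
    simp [h, tau2_apply, tau1_apply, Finset.sum_ite_eq, Finset.sum_ite_eq']

lemma h212 : t2 * (t1 * t2) = t2 := by
  refine LinearMap.ext fun t => funext fun i => funext fun j => ?_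
  simp only [Module.End.mul_apply]
  rw [tau2_apply, tau2_apply]
  by_cases h : i 1 = j 0 <;>
    simp [h, tau2_apply, tau1_apply, Finset.sum_ite_eq, Finset.sum_ite_eq']

lemma h121' : t1 * t2 * t1 = t1 := by rw [mul_assoc]; exact h121 N
lemma h212' : t2 * t1 * t2 = t2 := by rw [mul_assoc]; exact h212 N
lemma h122' : t1 * t2 * t2 = (N:ℂ) • (t1 * t2) := by rw [mul_assoc, h22, mul_smul_comm]
lemma h211' : t2 * t1 * t1 = (N:ℂ) • (t2 * t1) := by rw [mul_assoc, h11, mul_smul_comm]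

lemma AOp_eq : Mixed.AOp N 1 0 = t1 + t2 := by
  simp [Mixed.AOp, Fin.sum_univ_two, Fin.sum_univ_one]

lemma cubic : (Mixed.AOp N 1 0) * (Mixed.AOp N 1 0 * Mixed.AOp N 1 0)
    = (2*(N:ℂ)) • (Mixed.AOp N 1 0 * Mixed.AOp N 1 0) - ((N:ℂ)^2 - 1) • Mixed.AOp N 1 0 := by
  rw [AOp_eq]
  simp only [mul_add, add_mul, ← mul_assoc, h11, h22, h121', h212', h122', h211',
    smul_mul_assoc, mul_smul_comm, smul_add, smul_smul]
  module

/-- B operator -/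
def Bop : Module.End ℂ (Tens N 2 1) :=
  (2*(N:ℂ)) • Mixed.AOp N 1 0 - Mixed.AOp N 1 0 * Mixed.AOp N 1 0

lemma t1B : t1 * Bop N = ((N:ℂ)^2 - 1) • t1 := by
  rw [Bop, AOp_eq]
  simp only [mul_sub, mul_add, add_mul, ← mul_assoc, h11, h22, h121', h212',
    h122', h211', smul_mul_assoc, mul_smul_comm, smul_add, smul_smul]
  module

lemma t2B : t2 * Bop N = ((N:ℂ)^2 - 1) • t2 := by
  rw [Bop, AOp_eq]
  simp only [mul_sub, mul_add, add_mul, ← mul_assoc, h11, h22, h121', h212',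
    h122', h211', smul_mul_assoc, mul_smul_comm, smul_add, smul_smul]
  module

lemma hAB : Mixed.AOp N 1 0 * Bop N = ((N:ℂ)^2 - 1) • Mixed.AOp N 1 0 := by
  rw [Bop, mul_sub, mul_smul_comm, cubic]
  module

lemma hBB : Bop N * Bop N = ((N:ℂ)^2 - 1) • Bop N := by
  nth_rewrite 1 [Bop]
  rw [sub_mul, smul_mul_assoc, mul_assoc, hAB, mul_smul_comm, Bop]
  module

end Aux

section Aux2
variable (N : ℕ)

lemma tau_zero_of_tr (a : Fin 2) (b : Fin 1) (t : Tens N 2 1)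
    (h : Mixed.trMap N 1 0 a b t = 0) : Mixed.tau N 1 0 a b t = 0 := by
  simp [Mixed.tau, h]

lemma tr_zero_of_tau (hN : 0 < N) (a : Fin 2) (t : Tens N 2 1)
    (h : Mixed.tau N 1 0 a 0 t = 0) : Mixed.trMap N 1 0 a 0 t = 0 := by
  funext i' j'
  have hc := congrFun (congrFun h (a.insertNth (⟨0, hN⟩ : Fin N) i')) (fun _ => (⟨0, hN⟩ : Fin N))
  simp only [Mixed.tau, Mixed.insMap, LinearMap.comp_apply, LinearMap.coe_mk, AddHom.coe_mk,
    Fin.insertNth_apply_same, Fin.insertNth_apply_succAbove, eq_self_iff_true, if_true,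
    Pi.zero_apply] at hc
  simp only [Pi.zero_apply]
  convert hc using 2 <;> (funext y; exact y.elim0)

lemma mem_traceless_iff (t : Tens N 2 1) :
    t ∈ Mixed.traceless N 1 0 ↔ ∀ a : Fin 2, Mixed.trMap N 1 0 a 0 t = 0 := by
  simp only [Mixed.traceless, Submodule.mem_iInf, LinearMap.mem_ker]
  constructor
  · intro h a; exact h a 0
  · intro h a b
    have hb : b = 0 := Fin.ext (by have := b.isLt; omega)
    rw [hb]; exact h a

end Aux2

/-- for dim V = N ≥ 2, the spectrum of 𝒜_{2,1} = τ_{11'} + τ_{21'} on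
V ⊗ V ⊗ V* is {0, N−1, N+1}, and 𝒫_{2,1} = (1 − 𝒜/(N−1))(1 − 𝒜/(N+1)) is the
projector onto the subspace of tensors with both partial traces zero. -/
theorem spec_A21 (N : ℕ) (hN : 2 ≤ N) :
    spectrum ℂ (Mixed.AOp N 1 0) = {0, (N : ℂ) - 1, (N : ℂ) + 1} ∧
    (IsIdempotentElem
        ((1 - ((N : ℂ) - 1)⁻¹ • Mixed.AOp N 1 0) *
          (1 - ((N : ℂ) + 1)⁻¹ • Mixed.AOp N 1 0)) ∧
      LinearMap.range
        ((1 - ((N : ℂ) - 1)⁻¹ • Mixed.AOp N 1 0) *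
          (1 - ((N : ℂ) + 1)⁻¹ • Mixed.AOp N 1 0)) = Mixed.traceless N 1 0) := by
  have hc1 : (N : ℂ) - 1 ≠ 0 := by
    have h1 : (N : ℂ) ≠ 1 := by
      intro h
      rw [show (1:ℂ) = ((1:ℕ):ℂ) by norm_num, Nat.cast_inj] at h
      omega
    exact sub_ne_zero_of_ne h1
  have hc2 : (N : ℂ) + 1 ≠ 0 := by
    have : ((N + 1 : ℕ) : ℂ) ≠ 0 := Nat.cast_ne_zero.mpr (by omega)
    push_cast at this; exact this
  have hc3 : (N : ℂ)^2 - 1 ≠ 0 := by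
    have hfac : (N : ℂ)^2 - 1 = ((N:ℂ) - 1) * ((N:ℂ) + 1) := by ring
    rw [hfac]; exact mul_ne_zero hc1 hc2
  set A := Mixed.AOp N 1 0 with hAdef
  set Pr := (1 - ((N : ℂ) - 1)⁻¹ • A) * (1 - ((N : ℂ) + 1)⁻¹ • A) with hPrdef
  have hPr : Pr = 1 - (((N:ℂ)^2 - 1)⁻¹) • Bop N := by
    rw [hPrdef, Bop, ← hAdef]
    simp only [mul_sub, sub_mul, one_mul, mul_one, smul_mul_assoc, mul_smul_comm, smul_smul,
      smul_sub]
    match_scalars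
    · ring
    · field_simp; ring
    · field_simp; ring
  have zlt : 0 < N := by omega
  have olt : 1 < N := by omega
  set z : Fin N := ⟨0, zlt⟩ with hz
  set o : Fin N := ⟨1, olt⟩ with ho
  have hzo : z ≠ o := by simp [hz, ho, Fin.ext_iff]
  have hoz : o ≠ z := hzo.symm
  -- eigenvector for 0
  set w : Tens N 2 1 := (fun i j => if i 0 = z ∧ i 1 = z ∧ j 0 = o then (1:ℂ) else 0) with hw
  have hwne : w ≠ 0 := by
    intro h
    have := congrFun (congrFun h ![z, z]) ![o]
    simp [hw] at this
  have hAw : A w = (0:ℂ) • w := by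
    rw [hAdef, AOp_eq, zero_smul]
    funext i j
    have e1 : Mixed.tau N 1 0 0 0 w i j = 0 := by
      rw [tau1_apply]
      have hs : ∑ k : Fin N, w ![k, i 1] ![k] = 0 := by
        refine Finset.sum_eq_zero fun k _ => ?_
        simp only [hw, Matrix.cons_val_zero, Matrix.cons_val_one, Matrix.head_cons]
        split_ifs with h
        · exact absurd (h.1.symm.trans h.2.2) hzo
        · exact if_neg h
      rw [hs]; simp
    have e2 : Mixed.tau N 1 0 1 0 w i j = 0 := by
      rw [tau2_apply]
      have hs : ∑ k : Fin N, w ![i 0, k] ![k] = 0 := by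
        refine Finset.sum_eq_zero fun k _ => ?_
        simp only [hw, Matrix.cons_val_zero, Matrix.cons_val_one, Matrix.head_cons]
        split_ifs with h
        · exact absurd (h.2.1.symm.trans h.2.2) hzo
        · exact if_neg h
      rw [hs]; simp
    simp [LinearMap.add_apply, Pi.add_apply, e1, e2]
  -- eigenvector for N+1
  set u : Tens N 2 1 := (fun i j => (if i 0 = j 0 then (1:ℂ) else 0) + (if i 1 = j 0 then 1 else 0)) with hu
  have hune : u ≠ 0 := by
    intro h
    have := congrFun (congrFun h ![z, z]) ![z]
    simp [hu] at this
  have hAu : A u = ((N:ℂ) + 1) • u := by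
    rw [hAdef, AOp_eq]
    funext i j
    rw [LinearMap.add_apply, Pi.add_apply, Pi.add_apply, tau1_apply, tau2_apply]
    simp only [hu, Pi.smul_apply, smul_eq_mul, Matrix.cons_val_zero, Matrix.cons_val_one,
      Matrix.head_cons]
    simp only [Finset.sum_add_distrib]
    erw [Finset.sum_ite_eq, Finset.sum_ite_eq]
    by_cases h1 : i 0 = j 0 <;> by_cases h2 : i 1 = j 0 <;>
      simp [h1, h2, Finset.sum_add_distrib, Finset.sum_ite_eq, Finset.sum_ite_eq',
        Finset.card_univ] <;> ring
  -- eigenvector for N-1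
  set v : Tens N 2 1 := (fun i j => (if i 0 = j 0 then (1:ℂ) else 0) - (if i 1 = j 0 then 1 else 0)) with hv
  have hvne : v ≠ 0 := by
    intro h
    have := congrFun (congrFun h ![z, o]) ![z]
    simp [hv, hoz] at this
  have hAv : A v = ((N:ℂ) - 1) • v := by
    rw [hAdef, AOp_eq]
    funext i j
    rw [LinearMap.add_apply, Pi.add_apply, Pi.add_apply, tau1_apply, tau2_apply]
    simp only [hv, Pi.smul_apply, smul_eq_mul, Matrix.cons_val_zero, Matrix.cons_val_one,
      Matrix.head_cons]
    simp only [Finset.sum_sub_distrib]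
    erw [Finset.sum_ite_eq, Finset.sum_ite_eq]
    by_cases h1 : i 0 = j 0 <;> by_cases h2 : i 1 = j 0 <;>
      simp [h1, h2, Finset.sum_sub_distrib, Finset.sum_ite_eq, Finset.sum_ite_eq',
        Finset.card_univ] <;> ring
  refine ⟨?_, ?_, ?_⟩
  · -- spectrum
    ext μ
    simp only [Set.mem_insert_iff, Set.mem_singleton_iff]
    constructor
    · intro hμ
      obtain ⟨x, hx⟩ := (Module.End.hasEigenvalue_iff_mem_spectrum.mpr hμ).exists_hasEigenvector
      have h1 : A x = μ • x := hx.apply_eq_smul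
      have hcx := LinearMap.congr_fun (cubic N) x
      rw [← hAdef] at hcx
      simp only [Module.End.mul_apply, LinearMap.sub_apply, LinearMap.smul_apply, h1, map_smul,
        smul_smul] at hcx
      have key : (μ*μ*μ - (2*(N:ℂ)*(μ*μ) - ((N:ℂ)^2-1)*μ)) • x = 0 := by
        rw [sub_smul, sub_smul, hcx, sub_self]
      have hpoly : μ*μ*μ - (2*(N:ℂ)*(μ*μ) - ((N:ℂ)^2-1)*μ) = 0 := by
        rcases smul_eq_zero.mp key with h | h
        · exact h
        · exact absurd h hx.right
      have hfac : μ * ((μ - ((N:ℂ)-1)) * (μ - ((N:ℂ)+1))) = 0 := by linear_combination hpoly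
      rcases mul_eq_zero.mp hfac with h | h
      · exact Or.inl h
      · rcases mul_eq_zero.mp h with h | h
        · exact Or.inr (Or.inl (sub_eq_zero.mp h))
        · exact Or.inr (Or.inr (sub_eq_zero.mp h))
    · intro h
      rcases h with rfl | rfl | rfl
      · exact (Module.End.hasEigenvalue_of_hasEigenvector
          ⟨Module.End.mem_eigenspace_iff.mpr hAw, hwne⟩).mem_spectrum
      · exact (Module.End.hasEigenvalue_of_hasEigenvector
          ⟨Module.End.mem_eigenspace_iff.mpr hAv, hvne⟩).mem_spectrum
      · exact (Module.End.hasEigenvalue_of_hasEigenvector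
          ⟨Module.End.mem_eigenspace_iff.mpr hAu, hune⟩).mem_spectrum
  · -- idempotent
    show Pr * Pr = Pr
    rw [hPr]
    simp only [mul_sub, sub_mul, one_mul, mul_one, smul_mul_assoc, mul_smul_comm, smul_smul,
      smul_sub]
    rw [hBB]
    match_scalars <;> (field_simp; try ring)
  · -- range
    apply le_antisymm
    · rintro y ⟨t, rfl⟩
      rw [mem_traceless_iff]
      intro a
      apply tr_zero_of_tau N zlt a
      have hop0 : Mixed.tau N 1 0 0 0 * Pr = 0 := by
        rw [hPr, mul_sub, mul_one, mul_smul_comm, t1B, smul_smul, inv_mul_cancel₀ hc3,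
          one_smul, sub_self]
      have hop1 : Mixed.tau N 1 0 1 0 * Pr = 0 := by
        rw [hPr, mul_sub, mul_one, mul_smul_comm, t2B, smul_smul, inv_mul_cancel₀ hc3,
          one_smul, sub_self]
      have hop : Mixed.tau N 1 0 a 0 * Pr = 0 := by
        fin_cases a
        · exact hop0
        · exact hop1
      have := LinearMap.congr_fun hop t
      simpa using this
    · intro t ht
      rw [mem_traceless_iff] at ht
      have hta : ∀ a : Fin 2, Mixed.tau N 1 0 a 0 t = 0 := fun a => tau_zero_of_tr N a 0 t (ht a)
      have hAt : A t = 0 := by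
        rw [hAdef, AOp_eq, LinearMap.add_apply, hta 0, hta 1, add_zero]
      have hBt : Bop N t = 0 := by
        simp only [Bop, LinearMap.sub_apply, LinearMap.smul_apply, Module.End.mul_apply,
          ← hAdef, hAt, map_zero, smul_zero, sub_zero]
      refine ⟨t, ?_⟩
      rw [hPr]
      simp [LinearMap.sub_apply, LinearMap.smul_apply, hBt]
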